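/- Let F: X → ℝ≥0 be differentiable, monotone, and DR-submodular, and K ⊆ X convex. If x ∈ K is a stationary point of F over K, then F(x) ≥ OPT/2 where OPT = sup_{y∈K} F(y). -/

import Mathlib

open Set Finset

lemma seg_bound {n : ℕ} (F : EuclideanSpace ℝ (Fin n) → ℝ)
    (g : EuclideanSpace ℝ (Fin n) → EuclideanSpace ℝ (Fin n))
    (u v : EuclideanSpace ℝ (Fin n))
    (hdiff : ∀ t ∈ Set.Icc (0:ℝ) 1, HasGradientAt F (g (u + t • (v - u))) (u + t • (v - u)))
    (hle : ∀ t ∈ Set.Icc (0:ℝ) 1,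
      ∑ i, g (u + t • (v - u)) i * (v i - u i) ≤ ∑ i, g u i * (v i - u i)) :
    F v ≤ F u + ∑ i, g u i * (v i - u i) := by
  set c := ∑ i, g u i * (v i - u i) with hc
  set γ : ℝ → EuclideanSpace ℝ (Fin n) := fun t => u + t • (v - u) with hγ
  have hγd : ∀ t : ℝ, HasDerivAt γ (v - u) t := by
    intro t
    have h := ((hasDerivAt_id t).smul_const (v - u)).const_add u
    rw [one_smul] at h
    exact h
  have hφd : ∀ t ∈ Set.Icc (0:ℝ) 1,
      HasDerivAt (fun t => F (γ t)) (∑ i, g (γ t) i * (v i - u i)) t := by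
    intro t ht
    have h1 := ((hdiff t ht).hasFDerivAt).comp_hasDerivAt t (hγd t)
    have : ((InnerProductSpace.toDual ℝ (EuclideanSpace ℝ (Fin n))) (g (γ t))) (v - u)
        = ∑ i, g (γ t) i * (v i - u i) := by
      simp [InnerProductSpace.toDual_apply_apply, PiLp.inner_apply, RCLike.inner_apply, mul_comm]
    rw [this] at h1
    exact h1
  set ψ : ℝ → ℝ := fun t => c * t - F (γ t) with hψ
  have hψd : ∀ t ∈ Set.Icc (0:ℝ) 1,
      HasDerivAt ψ (c - ∑ i, g (γ t) i * (v i - u i)) t := by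
    intro t ht
    have h := ((hasDerivAt_id t).const_mul c).sub (hφd t ht)
    rw [mul_one] at h
    exact h
  have hmonoψ : MonotoneOn ψ (Set.Icc (0:ℝ) 1) := by
    apply monotoneOn_of_deriv_nonneg (convex_Icc 0 1)
    · intro t ht
      exact (hψd t ht).continuousAt.continuousWithinAt
    · intro t ht
      rw [interior_Icc] at ht
      exact ((hψd t (Set.mem_Icc_of_Ioo ht)).differentiableAt).differentiableWithinAt
    · intro t ht
      rw [interior_Icc] at ht
      rw [(hψd t (Set.mem_Icc_of_Ioo ht)).deriv]
      have := hle t (Set.mem_Icc_of_Ioo ht)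
      linarith
  have h01 := hmonoψ (Set.mem_Icc.mpr ⟨le_refl 0, zero_le_one⟩)
      (Set.mem_Icc.mpr ⟨zero_le_one, le_refl 1⟩) zero_le_one
  have hg0 : γ 0 = u := by simp [hγ]
  have hg1 : γ 1 = v := by simp [hγ]
  simp only [hψ, hg0, hg1, mul_zero, mul_one] at h01
  linarith


/-- Stationary points of a monotone DR-submodular function `F`
(antitone gradient) over a convex set `K ⊆ X` satisfy `F x ≥ OPT/2`,
where `OPT = sup_{y ∈ K} F y`. -/
theorem stmt_4 (n : ℕ) (a b : Fin n → ℝ) (ha : ∀ i, 0 ≤ a i)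
    (X : Set (EuclideanSpace ℝ (Fin n)))
    (hX : X = {x : EuclideanSpace ℝ (Fin n) | ∀ i, x i ∈ Set.Icc (a i) (b i)})
    (F : EuclideanSpace ℝ (Fin n) → ℝ)
    (g : EuclideanSpace ℝ (Fin n) → EuclideanSpace ℝ (Fin n))
    (hF0 : ∀ x ∈ X, 0 ≤ F x)
    (hdiff : ∀ x ∈ X, HasGradientAt F (g x) x)
    (hmono : ∀ x ∈ X, ∀ y ∈ X, (∀ i, x i ≤ y i) → F x ≤ F y)
    (hDR : ∀ x ∈ X, ∀ y ∈ X, (∀ i, x i ≤ y i) → ∀ i, g y i ≤ g x i)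
    (K : Set (EuclideanSpace ℝ (Fin n))) (hKX : K ⊆ X) (hK : Convex ℝ K)
    (hbdd : BddAbove (F '' K))
    (x : EuclideanSpace ℝ (Fin n)) (hx : x ∈ K)
    (hstat : ∀ y ∈ K, ∑ i, g x i * (y i - x i) ≤ 0) :
    sSup (F '' K) / 2 ≤ F x := by
  have hxX : x ∈ X := hKX hx
  have key : ∀ y ∈ K, F y ≤ 2 * F x := by
    intro y hyK
    have hyX : y ∈ X := hKX hyK
    set z : EuclideanSpace ℝ (Fin n) := WithLp.toLp 2 (fun i => max (x i) (y i)) with hz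
    set w : EuclideanSpace ℝ (Fin n) := WithLp.toLp 2 (fun i => min (x i) (y i)) with hw
    have hxi : ∀ i, a i ≤ x i ∧ x i ≤ b i := by
      intro i; exact (hX ▸ hxX) i
    have hyi : ∀ i, a i ≤ y i ∧ y i ≤ b i := by
      intro i; exact (hX ▸ hyX) i
    have hzX : z ∈ X := by
      rw [hX]; intro i
      exact ⟨le_max_of_le_left (hxi i).1, max_le (hxi i).2 (hyi i).2⟩
    have hwX : w ∈ X := by
      rw [hX]; intro i
      exact ⟨le_min (hxi i).1 (hyi i).1, min_le_of_left_le (hxi i).2⟩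
    -- membership of segment points and coordinate formula
    have happly : ∀ (v : EuclideanSpace ℝ (Fin n)) (t : ℝ) (i : Fin n),
        (x + t • (v - x)) i = x i + t * (v i - x i) := by
      intro v t i
      simp [PiLp.add_apply, PiLp.smul_apply, PiLp.sub_apply, smul_eq_mul]
    have hsegz : ∀ t ∈ Set.Icc (0:ℝ) 1, x + t • (z - x) ∈ X := by
      intro t ht
      rw [hX]; intro i
      rw [happly]
      constructor
      · have : 0 ≤ t * (z i - x i) :=
          mul_nonneg ht.1 (by simp [hz, sub_nonneg, le_max_left])
        linarith [(hxi i).1]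
      · have h1 : t * (z i - x i) ≤ z i - x i := by
          nlinarith [ht.1, ht.2, sub_nonneg.mpr (le_max_left (x i) (y i))]
        have := (hX ▸ hzX) i
        have : z i ≤ b i := this.2
        linarith
    have hsegw : ∀ t ∈ Set.Icc (0:ℝ) 1, x + t • (w - x) ∈ X := by
      intro t ht
      rw [hX]; intro i
      rw [happly]
      have hwle : w i - x i ≤ 0 := by simp [hw, min_le_left]
      constructor
      · have h1 : w i - x i ≤ t * (w i - x i) := by nlinarith [ht.1, ht.2]
        have : a i ≤ w i := ((hX ▸ hwX) i).1
        linarith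
      · have : t * (w i - x i) ≤ 0 := mul_nonpos_of_nonneg_of_nonpos ht.1 hwle
        linarith [(hxi i).2]
    have hxlez : ∀ t ∈ Set.Icc (0:ℝ) 1, ∀ i, x i ≤ (x + t • (z - x)) i := by
      intro t ht i
      rw [happly]
      have : 0 ≤ t * (z i - x i) :=
        mul_nonneg ht.1 (by simp [hz, sub_nonneg, le_max_left])
      linarith
    have hwlex : ∀ t ∈ Set.Icc (0:ℝ) 1, ∀ i, (x + t • (w - x)) i ≤ x i := by
      intro t ht i
      rw [happly]
      have : t * (w i - x i) ≤ 0 :=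
        mul_nonpos_of_nonneg_of_nonpos ht.1 (by simp [hw, min_le_left])
      linarith
    have hzb : F z ≤ F x + ∑ i, g x i * (z i - x i) := by
      apply seg_bound F g x z
      · intro t ht; exact hdiff _ (hsegz t ht)
      · intro t ht
        apply Finset.sum_le_sum
        intro i _
        apply mul_le_mul_of_nonneg_right
        · exact hDR x hxX _ (hsegz t ht) (hxlez t ht) i
        · simp [hz, sub_nonneg, le_max_left]
    have hwb : F w ≤ F x + ∑ i, g x i * (w i - x i) := by
      apply seg_bound F g x w
      · intro t ht; exact hdiff _ (hsegw t ht)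
      · intro t ht
        apply Finset.sum_le_sum
        intro i _
        rw [mul_comm (g _ i), mul_comm (g x i)]
        apply mul_le_mul_of_nonpos_left
        · exact hDR _ (hsegw t ht) x hxX (hwlex t ht) i
        · simp [hw, min_le_left]
    have hsum : ∑ i, g x i * (z i - x i) + ∑ i, g x i * (w i - x i)
        = ∑ i, g x i * (y i - x i) := by
      rw [← Finset.sum_add_distrib]
      apply Finset.sum_congr rfl
      intro i _
      have h : z i + w i = x i + y i := by
        simp [hz, hw, max_add_min]
      linear_combination g x i * h
    have hFy : F y ≤ F z := hmono y hyX z hzX (fun i => le_max_right _ _)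
    have hFw : 0 ≤ F w := hF0 w hwX
    have hst := hstat y hyK
    linarith
  have hne : (F '' K).Nonempty := ⟨F x, x, hx, rfl⟩
  have hsup : sSup (F '' K) ≤ 2 * F x := by
    apply csSup_le hne
    rintro _ ⟨y, hyK, rfl⟩
    exact key y hyK
  linarith
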